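/- Let F be a field, V_1, ..., V_N finite-dimensional subspaces of a vector space over F, and 1 ≤ T ≤ N. Then (1 / C(N,T)) · Σ_{Γ ⊆ [N], |Γ| = T} dim(Σ_{i∈Γ} V_i) ≥ (T/N) · dim(Σ_{i=1}^N V_i). -/

import Mathlib

open Finset Module

lemma card_powersetCard_filter_mem {α : Type*} [DecidableEq α] (s : Finset α) (j : α)
    (hj : j ∈ s) (T : ℕ) (hT : 1 ≤ T) :
    (((s.powersetCard T).filter (fun Γ => j ∈ Γ)).card) = (s.card - 1).choose (T - 1) := by
  rw [← Finset.card_erase_of_mem hj, ← Finset.card_powersetCard]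
  apply Finset.card_bij (fun Γ _ => Γ.erase j)
  · intro Γ hΓ
    simp only [Finset.mem_filter, Finset.mem_powersetCard] at hΓ
    obtain ⟨⟨hsub, hcard⟩, hjΓ⟩ := hΓ
    rw [Finset.mem_powersetCard]
    exact ⟨Finset.erase_subset_erase _ hsub, by rw [Finset.card_erase_of_mem hjΓ, hcard]⟩
  · intro Γ₁ h₁ Γ₂ h₂ h
    simp only [Finset.mem_filter] at h₁ h₂
    rw [← Finset.insert_erase h₁.2, ← Finset.insert_erase h₂.2, h]
  · intro S hS
    rw [Finset.mem_powersetCard] at hS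
    obtain ⟨hsub, hcard⟩ := hS
    have hjS : j ∉ S := fun h => (Finset.mem_erase.1 (hsub h)).1 rfl
    refine ⟨insert j S, ?_, ?_⟩
    · simp only [Finset.mem_filter, Finset.mem_powersetCard]
      refine ⟨⟨Finset.insert_subset hj (hsub.trans (Finset.erase_subset _ _)), ?_⟩,
        Finset.mem_insert_self _ _⟩
      rw [Finset.card_insert_of_notMem hjS, hcard]
      omega
    · rw [Finset.erase_insert hjS]

set_option maxHeartbeats 1000000 in
theorem dim_han_inequality (F : Type*) [Field F] (W : Type*) [AddCommGroup W] [Module F W]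
    (N T : ℕ) (hT : 1 ≤ T) (hTN : T ≤ N)
    (V : Fin N → Submodule F W) (hfd : ∀ i, FiniteDimensional F ↥(V i)) :
    (T : ℚ) / (N : ℚ) * (Module.finrank F ↥(⨆ i, V i) : ℚ)
      ≤ (1 / (Nat.choose N T : ℚ)) *
          ∑ Γ ∈ Finset.powersetCard T (Finset.univ : Finset (Fin N)),
            (Module.finrank F ↥(⨆ i ∈ Γ, V i) : ℚ) := by
  classical
  have hfin : ∀ S : Finset (Fin N), FiniteDimensional F ↥(S.sup V) := fun S =>
    Submodule.finiteDimensional_finset_sup S V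
  set d : Finset (Fin N) → ℚ := fun S => (Module.finrank F ↥(S.sup V) : ℚ) with hd
  have hd_eq : ∀ S : Finset (Fin N),
      (Module.finrank F ↥(⨆ i ∈ S, V i) : ℚ) = d S := by
    intro S
    simp only [hd]
    rw [Finset.sup_eq_iSup]
  set Q : ℕ → Finset (Fin N) := fun m => Finset.univ.filter (fun i => (i : ℕ) < m) with hQ
  have hQsucc : ∀ j : Fin N, Q ((j : ℕ) + 1) = insert j (Q (j : ℕ)) := by
    intro j
    ext i
    simp only [hQ, Finset.mem_filter, Finset.mem_univ, true_and, Finset.mem_insert,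
      Nat.lt_succ_iff_lt_or_eq, Fin.ext_iff]
    tauto
  -- submodularity key step
  have key : ∀ (j : Fin N) (S : Finset (Fin N)), S ⊆ Q (j : ℕ) →
      d S + d (Q ((j : ℕ) + 1)) ≤ d (insert j S) + d (Q (j : ℕ)) := by
    intro j S hS
    have hA := hfin (insert j S)
    have hB := hfin (Q (j : ℕ))
    have hsub : S.sup V ≤ (insert j S).sup V ⊓ (Q (j : ℕ)).sup V :=
      le_inf (Finset.sup_mono (Finset.subset_insert _ _)) (Finset.sup_mono hS)
    have hunion : (insert j S).sup V ⊔ (Q (j : ℕ)).sup V = (Q ((j : ℕ) + 1)).sup V := by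
      rw [hQsucc j, Finset.sup_insert, Finset.sup_insert, sup_assoc]
      congr 1
      exact sup_eq_right.2 (Finset.sup_mono hS)
    have hmod := Submodule.finrank_sup_add_finrank_inf_eq ((insert j S).sup V) ((Q (j : ℕ)).sup V)
    have hinf : FiniteDimensional F ↥((insert j S).sup V ⊓ (Q (j : ℕ)).sup V) :=
      Submodule.finiteDimensional_of_le (inf_le_left)
    have hge : Module.finrank F ↥(S.sup V) ≤
        Module.finrank F ↥((insert j S).sup V ⊓ (Q (j : ℕ)).sup V) :=
      Submodule.finrank_mono hsub
    rw [hunion] at hmod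
    have : Module.finrank F ↥(S.sup V) + Module.finrank F ↥((Q ((j : ℕ) + 1)).sup V) ≤
        Module.finrank F ↥((insert j S).sup V) + Module.finrank F ↥((Q (j : ℕ)).sup V) := by
      omega
    simp only [hd]
    exact_mod_cast this
  -- telescoping over a finset
  have tele : ∀ Γ : Finset (Fin N),
      ∑ j ∈ Γ, (d (Q ((j : ℕ) + 1)) - d (Q (j : ℕ))) ≤ d Γ := by
    intro Γ
    induction Γ using Finset.induction_on_max with
    | empty => simp [hd]
    | insert a s ha ih =>
      have hans : a ∉ s := fun h => lt_irrefl a (ha a h)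
      rw [Finset.sum_insert hans]
      have hsQ : s ⊆ Q (a : ℕ) := by
        intro i hi
        simp only [hQ, Finset.mem_filter, Finset.mem_univ, true_and]
        exact_mod_cast ha i hi
      have := key a s hsQ
      linarith
  -- sum the telescoped bound over all Γ
  set g : Fin N → ℚ := fun j => d (Q ((j : ℕ) + 1)) - d (Q (j : ℕ)) with hg
  have hswap : ∑ Γ ∈ Finset.powersetCard T (Finset.univ : Finset (Fin N)), ∑ j ∈ Γ, g j
      = ((N - 1).choose (T - 1) : ℚ) * ∑ j : Fin N, g j := by
    have h1 : ∀ Γ : Finset (Fin N), ∑ j ∈ Γ, g j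
        = ∑ j : Fin N, if j ∈ Γ then g j else 0 := by
      intro Γ
      rw [Finset.sum_ite_mem]
      congr 1
      exact (Finset.univ_inter Γ).symm
    simp_rw [h1]
    rw [Finset.sum_comm]
    rw [Finset.mul_sum]
    refine Finset.sum_congr rfl fun j _ => ?_
    rw [← Finset.sum_filter]
    rw [Finset.sum_const]
    rw [card_powersetCard_filter_mem (Finset.univ : Finset (Fin N)) j (Finset.mem_univ j) T hT]
    rw [Finset.card_univ, Fintype.card_fin]
    simp [nsmul_eq_mul]
  -- telescoping the full sum
  have hQN : Q N = Finset.univ := by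
    ext i
    simp [hQ, i.isLt]
  have hQ0 : Q 0 = ∅ := by
    ext i
    simp [hQ]
  have htelesum : ∑ j : Fin N, g j = d Finset.univ := by
    have := Fin.sum_univ_eq_sum_range (fun m => d (Q (m + 1)) - d (Q m)) N
    rw [hg]
    simp only at this ⊢
    rw [this, Finset.sum_range_sub (fun m => d (Q m)), hQN, hQ0]
    simp [hd]
  -- main bound
  have hmain : ((N - 1).choose (T - 1) : ℚ) * d Finset.univ
      ≤ ∑ Γ ∈ Finset.powersetCard T (Finset.univ : Finset (Fin N)), d Γ := by
    rw [← htelesum, ← hswap]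
    exact Finset.sum_le_sum fun Γ _ => tele Γ
  -- rewrite the goal in terms of d
  have hUsup : (⨆ i, V i) = Finset.univ.sup V := by
    apply le_antisymm
    · exact iSup_le fun i => Finset.le_sup (Finset.mem_univ i)
    · exact Finset.sup_le fun i _ => le_iSup V i
  have hgoal_sum : ∑ Γ ∈ Finset.powersetCard T (Finset.univ : Finset (Fin N)),
      (Module.finrank F ↥(⨆ i ∈ Γ, V i) : ℚ)
      = ∑ Γ ∈ Finset.powersetCard T (Finset.univ : Finset (Fin N)), d Γ :=
    Finset.sum_congr rfl fun Γ _ => hd_eq Γ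
  rw [hgoal_sum, hUsup]
  -- arithmetic finish
  have hN : 0 < N := lt_of_lt_of_le hT hTN
  have hid : N * (N - 1).choose (T - 1) = N.choose T * T := by
    have h1 : N - 1 + 1 = N := by omega
    have h2 : T - 1 + 1 = T := by omega
    simpa [Nat.succ_eq_add_one, h1, h2] using Nat.add_one_mul_choose_eq (N - 1) (T - 1)
  have hC : (0 : ℚ) < (N.choose T : ℚ) := by
    exact_mod_cast Nat.choose_pos hTN
  have hNQ : (0 : ℚ) < (N : ℚ) := by exact_mod_cast hN
  have hratio : (T : ℚ) / (N : ℚ) = ((N - 1).choose (T - 1) : ℚ) / (N.choose T : ℚ) := by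
    rw [div_eq_div_iff hNQ.ne' hC.ne']
    have : ((N : ℚ)) * ((N - 1).choose (T - 1) : ℚ) = ((N.choose T : ℚ)) * (T : ℚ) := by
      exact_mod_cast hid
    linarith
  have hdnn : (0 : ℚ) ≤ d Finset.univ := by
    simp only [hd]
    positivity
  calc (T : ℚ) / (N : ℚ) * (Module.finrank F ↥(Finset.univ.sup V) : ℚ)
      = (1 / (N.choose T : ℚ)) * (((N - 1).choose (T - 1) : ℚ) * d Finset.univ) := by
        rw [hratio]; simp only [hd]; ring
    _ ≤ (1 / (N.choose T : ℚ)) *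
          ∑ Γ ∈ Finset.powersetCard T (Finset.univ : Finset (Fin N)), d Γ := by
        apply mul_le_mul_of_nonneg_left hmain
        positivity
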